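/- Suppose each component of type l is replaced by a parallel block of v_l + 1 components (v_l ≥ 0 an integer), so that for each type l and each block position j ∈ {1,…,n_l} there are lifetimes U^{(l)}_{j,1},…,U^{(l)}_{j,v_l+1}, all lifetimes (over all types, blocks and positions) being mutually independent with common type-l distribution function F_l. Let the block lifetime be B^{(l)}_j := max_{1≤r≤v_l+1} U^{(l)}_{j,r}, and let T_R be a random variable such that {T_R > t} = {φ(Y(t)) = 1} for all t ≥ 0, where Y(t) is the state vector with (l,j) coordinate equal to 1 iff B^{(l)}_j > t. Then P(T_R > t) = Σ_{l_1=0}^{n_1} ⋯ Σ_{l_L=0}^{n_L} Φ(l_1,…,l_L) ∏_{k=1}^L C(n_k, l_k) · (1 − F_k(t)^{v_k+1})^{l_k} · (F_k(t)^{v_k+1})^{n_k−l_k}. -/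

import Mathlib

open MeasureTheory Finset ProbabilityTheory


lemma blockF {m : ℕ} (w : Bool → ℝ) :
    ∑ cc ∈ univ.filter (fun cc : Fin m → Bool => decide (∃ r, cc r = true) = false),
      ∏ r, w (cc r) = w false ^ m := by
  have h : univ.filter (fun cc : Fin m → Bool => decide (∃ r, cc r = true) = false)
      = {fun _ => false} := by
    ext cc
    simp only [mem_filter, mem_univ, true_and, mem_singleton, decide_eq_false_iff_not,
      not_exists, funext_iff]
    simp
  rw [h, sum_singleton]
  simp [prod_const]

lemma blockTot {m : ℕ} (w : Bool → ℝ) :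
    ∑ cc : Fin m → Bool, ∏ r, w (cc r) = (w true + w false) ^ m := by
  rw [← Fintype.prod_sum fun (_ : Fin m) (b : Bool) => w b]
  simp [Fintype.sum_bool]

lemma blockT {m : ℕ} (w : Bool → ℝ) :
    ∑ cc ∈ univ.filter (fun cc : Fin m → Bool => decide (∃ r, cc r = true) = true),
      ∏ r, w (cc r) = (w true + w false) ^ m - w false ^ m := by
  have h := Finset.sum_filter_add_sum_filter_not univ
    (fun cc : Fin m → Bool => decide (∃ r, cc r = true) = true) (fun cc => ∏ r, w (cc r))
  have h2 : univ.filter (fun cc : Fin m → Bool => ¬ (decide (∃ r, cc r = true) = true))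
      = univ.filter (fun cc : Fin m → Bool => decide (∃ r, cc r = true) = false) := by
    apply filter_congr; intro cc _; simp
  rw [h2, blockF, blockTot] at h
  linarith

lemma sum_config {L : ℕ} (n : Fin L → ℕ) (m : Fin L → ℕ)
    (g : (l : Fin L) → (Fin (m l) → Bool) → ℝ)
    (H : ((l : Fin L) → Fin (n l) → Bool) → ℝ) :
    ∑ b : (l : Fin L) → Fin (n l) → Fin (m l) → Bool,
      H (fun l j => decide (∃ r, b l j r = true)) * ∏ l, ∏ j, g l (b l j)
    = ∑ x : (l : Fin L) → Fin (n l) → Bool,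
        H x * ∏ l, ∏ j,
          ∑ cc ∈ univ.filter (fun cc : Fin (m l) → Bool => decide (∃ r, cc r = true) = x l j),
            g l cc := by
  classical
  rw [← Finset.sum_fiberwise univ
    (fun b : (l : Fin L) → Fin (n l) → Fin (m l) → Bool =>
      (fun l j => decide (∃ r, b l j r = true)))
    (fun b => H (fun l j => decide (∃ r, b l j r = true)) * ∏ l, ∏ j, g l (b l j))]
  refine Finset.sum_congr rfl fun x _ => ?_
  have hfib : (univ.filter fun b : (l : Fin L) → Fin (n l) → Fin (m l) → Bool =>
      (fun l j => decide (∃ r, b l j r = true)) = x)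
      = Fintype.piFinset (fun l => Fintype.piFinset (fun j =>
          univ.filter (fun cc : Fin (m l) → Bool => decide (∃ r, cc r = true) = x l j))) := by
    ext b
    simp [Fintype.mem_piFinset, funext_iff]
  calc ∑ b ∈ univ.filter (fun b : (l : Fin L) → Fin (n l) → Fin (m l) → Bool =>
        (fun l j => decide (∃ r, b l j r = true)) = x),
        H (fun l j => decide (∃ r, b l j r = true)) * ∏ l, ∏ j, g l (b l j)
      = ∑ b ∈ univ.filter (fun b : (l : Fin L) → Fin (n l) → Fin (m l) → Bool =>
        (fun l j => decide (∃ r, b l j r = true)) = x),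
        H x * ∏ l, ∏ j, g l (b l j) := by
        refine Finset.sum_congr rfl fun b hb => ?_
        rw [(mem_filter.mp hb).2]
    _ = H x * ∑ b ∈ univ.filter (fun b : (l : Fin L) → Fin (n l) → Fin (m l) → Bool =>
        (fun l j => decide (∃ r, b l j r = true)) = x), ∏ l, ∏ j, g l (b l j) := by
        rw [Finset.mul_sum]
    _ = _ := by
        rw [hfib]
        congr 1
        have h1 : ∀ l, (∏ j, ∑ cc ∈ univ.filter
            (fun cc : Fin (m l) → Bool => decide (∃ r, cc r = true) = x l j), g l cc)
            = ∑ y ∈ Fintype.piFinset (fun j => univ.filter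
              (fun cc : Fin (m l) → Bool => decide (∃ r, cc r = true) = x l j)),
              ∏ j, g l (y j) := fun l => Finset.prod_univ_sum _ _
        rw [Finset.prod_congr rfl (fun l _ => h1 l),
          Finset.prod_univ_sum (fun l => Fintype.piFinset (fun j => univ.filter
            (fun cc : Fin (m l) → Bool => decide (∃ r, cc r = true) = x l j)))
            (fun l y => ∏ j, g l (y j))]

lemma prob_eq {Ω : Type*} [MeasurableSpace Ω] (P : Measure Ω) [IsProbabilityMeasure P]
    {ι : Type*} [Fintype ι] [DecidableEq ι] (f : ι → Ω → ℝ) (hmeas : ∀ i, Measurable (f i))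
    (hindep : iIndepFun f P) (t : ℝ)
    (G : (ι → Bool) → Bool) (F : ι → ℝ) (hF : ∀ i, (P {ω | f i ω ≤ t}).toReal = F i) :
    (P {ω | G (fun i => decide (t < f i ω)) = true}).toReal
    = ∑ b : ι → Bool, (if G b = true then (1:ℝ) else 0)
        * ∏ i, (if b i then 1 - F i else F i) := by
  classical
  have hS : ∀ b : ι → Bool, {ω | (fun i => decide (t < f i ω)) = b}
      = ⋂ i, f i ⁻¹' (if b i then Set.Ioi t else Set.Iic t) := by
    intro b
    ext ω
    simp only [Set.mem_setOf_eq, funext_iff, Set.mem_iInter, Set.mem_preimage]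
    refine forall_congr' fun i => ?_
    cases h : b i <;> simp [h, not_lt]
  have hsetmeas : ∀ (bi : Bool), MeasurableSet (if bi then Set.Ioi t else Set.Iic t) := by
    intro bi; cases bi <;> simp [measurableSet_Ioi, measurableSet_Iic]
  have hmeasS : ∀ b : ι → Bool, MeasurableSet {ω | (fun i => decide (t < f i ω)) = b} := by
    intro b
    rw [hS b]
    exact MeasurableSet.iInter fun i => (hmeas i) (hsetmeas (b i))
  have hP : ∀ b : ι → Bool, P {ω | (fun i => decide (t < f i ω)) = b}
      = ∏ i, P (f i ⁻¹' (if b i then Set.Ioi t else Set.Iic t)) := by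
    intro b
    rw [hS b]
    exact hindep.meas_iInter fun i => ⟨_, hsetmeas (b i), rfl⟩
  have hPi : ∀ (i : ι) (bi : Bool),
      (P (f i ⁻¹' (if bi then Set.Ioi t else Set.Iic t))).toReal
        = if bi then 1 - F i else F i := by
    intro i bi
    cases bi
    · rw [if_neg Bool.false_ne_true, if_neg Bool.false_ne_true]; exact hF i
    · simp only [if_true]
      have hpre : f i ⁻¹' Set.Ioi t = {ω | f i ω ≤ t}ᶜ := by
        ext ω; simp [not_le]
      rw [hpre, measure_compl (show MeasurableSet {ω | f i ω ≤ t} from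
          hmeas i measurableSet_Iic) (measure_ne_top P _), measure_univ,
        ENNReal.toReal_sub_of_le prob_le_one ENNReal.one_ne_top, ENNReal.toReal_one, hF i]
  have hunion : {ω | G (fun i => decide (t < f i ω)) = true}
      = ⋃ b ∈ univ.filter (fun b : ι → Bool => G b = true),
          {ω | (fun i => decide (t < f i ω)) = b} := by
    ext ω
    simp only [Set.mem_setOf_eq, Set.mem_iUnion, mem_filter, mem_univ, true_and]
    constructor
    · intro h; exact ⟨_, h, rfl⟩
    · rintro ⟨b, hb, hbe⟩; rw [hbe]; exact hb
  have hdisj : (↑(univ.filter (fun b : ι → Bool => G b = true)) : Set (ι → Bool)).PairwiseDisjoint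
      (fun b => {ω | (fun i => decide (t < f i ω)) = b}) := by
    intro b1 _ b2 _ hne
    simp only [Function.onFun, Set.disjoint_left]
    intro ω h1 h2
    exact hne (h1.symm.trans h2)
  rw [hunion, measure_biUnion_finset hdisj (fun b _ => hmeasS b), Finset.sum_filter,
    ENNReal.toReal_sum (by intro b _; split_ifs; exacts [measure_ne_top P _, ENNReal.zero_ne_top])]
  refine Finset.sum_congr rfl fun b _ => ?_
  split_ifs with h
  · rw [hP b, ENNReal.toReal_prod, one_mul]
    exact Finset.prod_congr rfl fun i _ => hPi i (b i)
  · simp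

/-- The survival signature of a structure function `φ`:
`Φ(c) = (∏_k C(n_k, c_k))⁻¹ · Σ_{x : exactly c_k working components of each type k} φ(x)`. -/
noncomputable def survSig {L : ℕ} (n : Fin L → ℕ)
    (φ : ((l : Fin L) → Fin (n l) → Bool) → Bool) (c : Fin L → ℕ) : ℝ :=
  (∑ x : (l : Fin L) → Fin (n l) → Bool,
      if (∀ l, (Finset.univ.filter fun j => x l j = true).card = c l) ∧ φ x = true
      then (1 : ℝ) else 0)
    / ∏ l, (Nat.choose (n l) (c l) : ℝ)


lemma rhs_eq {L : ℕ} (n : Fin L → ℕ)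
    (φ : ((l : Fin L) → Fin (n l) → Bool) → Bool) (p q : Fin L → ℝ) :
    ∑ c : (k : Fin L) → Fin (n k + 1),
      survSig n φ (fun k => (c k : ℕ))
        * ∏ k, (Nat.choose (n k) (c k) : ℝ) * p k ^ (c k : ℕ) * q k ^ (n k - (c k : ℕ))
    = ∑ x : (l : Fin L) → Fin (n l) → Bool,
        (if φ x = true then (1:ℝ) else 0) * ∏ k, ∏ j, (if x k j = true then p k else q k) := by
  classical
  have hterm : ∀ c : (k : Fin L) → Fin (n k + 1),
      survSig n φ (fun k => (c k : ℕ))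
        * ∏ k, (Nat.choose (n k) (c k) : ℝ) * p k ^ (c k : ℕ) * q k ^ (n k - (c k : ℕ))
      = ∑ x : (l : Fin L) → Fin (n l) → Bool,
          (if (∀ l, (Finset.univ.filter fun j => x l j = true).card = (c l : ℕ)) ∧ φ x = true
            then (1 : ℝ) else 0)
          * ∏ k, p k ^ (c k : ℕ) * q k ^ (n k - (c k : ℕ)) := by
    intro c
    have hsplit : ∏ k, (Nat.choose (n k) (c k) : ℝ) * p k ^ (c k : ℕ) * q k ^ (n k - (c k : ℕ))
        = (∏ k, (Nat.choose (n k) (c k) : ℝ))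
          * ∏ k, p k ^ (c k : ℕ) * q k ^ (n k - (c k : ℕ)) := by
      rw [← Finset.prod_mul_distrib]
      exact Finset.prod_congr rfl fun k _ => by ring
    have hne : (∏ k, (Nat.choose (n k) (c k) : ℝ)) ≠ 0 := by
      apply Finset.prod_ne_zero_iff.mpr
      intro k _
      exact_mod_cast (Nat.choose_pos (Nat.lt_succ_iff.mp (c k).isLt)).ne'
    rw [hsplit, survSig, ← mul_assoc, div_mul_cancel₀ _ hne, Finset.sum_mul]
  rw [Finset.sum_congr rfl fun c _ => hterm c, Finset.sum_comm]
  refine Finset.sum_congr rfl fun x _ => ?_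
  set c₀ : (k : Fin L) → Fin (n k + 1) :=
    fun k => ⟨(Finset.univ.filter fun j => x k j = true).card,
      Nat.lt_succ_of_le (le_trans (Finset.card_filter_le _ _) (by simp))⟩ with hc₀
  rw [Finset.sum_eq_single c₀]
  · have h1 : (∀ l, (Finset.univ.filter fun j => x l j = true).card = (c₀ l : ℕ)) := fun l => rfl
    rw [if_congr (iff_of_eq (congrArg (· ∧ φ x = true) (eq_true h1))) rfl rfl]
    simp only [true_and]
    congr 1
    refine Finset.prod_congr rfl fun k _ => ?_
    have hite : ∏ j, (if x k j = true then p k else q k)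
        = p k ^ (Finset.univ.filter fun j => x k j = true).card
          * q k ^ (Finset.univ.filter fun j => ¬ (x k j = true)).card := by
      rw [Finset.prod_ite, Finset.prod_const, Finset.prod_const]
    have hcard : (Finset.univ.filter fun j => ¬ (x k j = true)).card
        = n k - (Finset.univ.filter fun j => x k j = true).card := by
      have := Finset.card_filter_add_card_filter_not (s := (univ : Finset (Fin (n k))))
        (p := fun j => x k j = true)
      simp only [Finset.card_univ, Fintype.card_fin] at this
      omega
    rw [hite, hcard]
  · intro c _ hne
    have : ¬ (∀ l, (Finset.univ.filter fun j => x l j = true).card = (c l : ℕ)) := by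
      intro hall
      apply hne
      funext k
      exact Fin.ext ((hall k).symm)
    simp [this]
  · intro h
    exact absurd (Finset.mem_univ c₀) h

/-- If each component of type `l` is replaced by a parallel block of
`v_l + 1` i.i.d. components (all lifetimes mutually independent, type-`l` distribution
function `F_l`), then the reliability of the redundant system `T_R` equals
`Σ_l Φ(l) ∏_k C(n_k, l_k) (1 − F_k(t)^{v_k+1})^{l_k} (F_k(t)^{v_k+1})^{n_k−l_k}`. -/
theorem stmt_7
    {Ω : Type*} [MeasurableSpace Ω] (P : Measure Ω) [IsProbabilityMeasure P]
    {L : ℕ} (hL : 1 ≤ L) (n : Fin L → ℕ) (hn : ∀ l, 1 ≤ n l)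
    (v : Fin L → ℕ)
    (U : (l : Fin L) → Fin (n l) → Fin (v l + 1) → Ω → ℝ)
    (hUmeas : ∀ l j r, Measurable (U l j r))
    (hindep : iIndepFun
      (fun p : Σ l : Fin L, Fin (n l) × Fin (v l + 1) => fun ω => U p.1 p.2.1 p.2.2 ω) P)
    (F : Fin L → ℝ → ℝ)
    (hF : ∀ l j r x, (P {ω | U l j r ω ≤ x}).toReal = F l x)
    (φ : ((l : Fin L) → Fin (n l) → Bool) → Bool) (hφ : Monotone φ)
    (TR : Ω → ℝ) (hTR : Measurable TR)
    (hT : ∀ t : ℝ, 0 ≤ t →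
      {ω | t < TR ω}
        = {ω | φ (fun l j =>
            decide (t < Finset.univ.sup' Finset.univ_nonempty
              (fun r : Fin (v l + 1) => U l j r ω))) = true})
    (t : ℝ) (ht : 0 ≤ t) :
    (P {ω | t < TR ω}).toReal
    = ∑ l : (k : Fin L) → Fin (n k + 1),
        survSig n φ (fun k => (l k : ℕ))
          * ∏ k, (Nat.choose (n k) (l k) : ℝ)
              * (1 - F k t ^ (v k + 1)) ^ (l k : ℕ)
              * (F k t ^ (v k + 1)) ^ (n k - (l k : ℕ)) := by
  classical
  set G : ((Σ l : Fin L, Fin (n l) × Fin (v l + 1)) → Bool) → Bool :=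
    fun b => φ (fun l j => decide (∃ r, b ⟨l, (j, r)⟩ = true)) with hG
  have hset : {ω | t < TR ω}
      = {ω | G (fun p : (Σ l : Fin L, Fin (n l) × Fin (v l + 1)) => decide (t < U p.1 p.2.1 p.2.2 ω)) = true} := by
    rw [hT t ht]
    ext ω
    simp only [Set.mem_setOf_eq, hG]
    have harg : (fun l j => decide (t < Finset.univ.sup' Finset.univ_nonempty
          (fun r : Fin (v l + 1) => U l j r ω)))
        = (fun l (j : Fin (n l)) => decide (∃ r : Fin (v l + 1),
            decide (t < U l j r ω) = true)) := by
      funext l j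
      apply decide_eq_decide.mpr
      simp [Finset.lt_sup'_iff]
    rw [harg]
  rw [hset, prob_eq P (fun p : (Σ l : Fin L, Fin (n l) × Fin (v l + 1)) => fun ω => U p.1 p.2.1 p.2.2 ω)
    (fun p => hUmeas p.1 p.2.1 p.2.2) hindep t G (fun p => F p.1 t)
    (fun p => hF p.1 p.2.1 p.2.2 t)]
  rw [rhs_eq n φ (fun k => 1 - F k t ^ (v k + 1)) (fun k => F k t ^ (v k + 1))]
  have hbij : Function.Bijective
      (fun (b : (l : Fin L) → Fin (n l) → Fin (v l + 1) → Bool) =>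
        (fun p : (Σ l : Fin L, Fin (n l) × Fin (v l + 1)) => b p.1 p.2.1 p.2.2)) := by
    constructor
    · intro b1 b2 h
      funext l j r
      exact congrFun h ⟨l, (j, r)⟩
    · intro g
      refine ⟨fun l j r => g ⟨l, (j, r)⟩, ?_⟩
      funext p
      obtain ⟨l, j, r⟩ := p
      rfl
  rw [← Fintype.sum_bijective _ hbij
    (fun b : (l : Fin L) → Fin (n l) → Fin (v l + 1) → Bool =>
      (if φ (fun l j => decide (∃ r, b l j r = true)) = true then (1:ℝ) else 0)
        * ∏ l, ∏ j, ∏ r, (if b l j r then 1 - F l t else F l t))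
    _ ?hcomp]
  case hcomp =>
    intro b
    have hps := Finset.prod_sigma (univ : Finset (Fin L))
      (fun l => (univ : Finset (Fin (n l) × Fin (v l + 1))))
      (fun p : (Σ l : Fin L, Fin (n l) × Fin (v l + 1)) =>
        if b p.1 p.2.1 p.2.2 then 1 - F p.1 t else F p.1 t)
    rw [Finset.univ_sigma_univ] at hps
    have hprod : (∏ l, ∏ j, ∏ r, (if b l j r then 1 - F l t else F l t))
        = ∏ p : (Σ l : Fin L, Fin (n l) × Fin (v l + 1)),
            (if b p.1 p.2.1 p.2.2 then 1 - F p.1 t else F p.1 t) := by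
      rw [hps]
      exact Finset.prod_congr rfl fun l _ => (Fintype.prod_prod_type
        (fun jr : Fin (n l) × Fin (v l + 1) =>
          if b l jr.1 jr.2 then 1 - F l t else F l t)).symm
    show (if φ (fun l j => decide (∃ r, b l j r = true)) = true then (1:ℝ) else 0)
        * ∏ l, ∏ j, ∏ r, (if b l j r then 1 - F l t else F l t)
      = (if G (fun p : (Σ l : Fin L, Fin (n l) × Fin (v l + 1)) => b p.1 p.2.1 p.2.2) = true
          then (1:ℝ) else 0)
        * ∏ p : (Σ l : Fin L, Fin (n l) × Fin (v l + 1)),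
            (if b p.1 p.2.1 p.2.2 then 1 - F p.1 t else F p.1 t)
    rw [hprod]
  rw [sum_config n (fun l => v l + 1)
    (fun l cc => ∏ r, (if cc r then 1 - F l t else F l t))
    (fun x => if φ x = true then (1:ℝ) else 0)]
  refine Finset.sum_congr rfl fun x _ => ?_
  congr 1
  refine Finset.prod_congr rfl fun l _ => Finset.prod_congr rfl fun j _ => ?_
  cases hx : x l j
  · rw [blockF (fun s => if s then 1 - F l t else F l t)]
    simp
  · rw [blockT (fun s => if s then 1 - F l t else F l t)]
    have h1 : (1 - F l t + F l t) = 1 := by ring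
    simp only [if_true, if_false, h1, one_pow]
    simp
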